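/- Let G be a finite group, S a Sylow p-subgroup of G, and b an element of G of order q^v (p ≠ q primes) such that b^q ∈ Z(G) and the normalizer N_G(S) has order divisible by q^v. Then some conjugate S₁ = gSg⁻¹ of S is normalized by b, and ⟨b, S₁⟩ = S₁ ⋊ ⟨b⟩. -/

import Mathlib

/-- Let `G` be a finite group, `p ≠ q` primes, `S` a Sylow `p`-subgroup, and `b`
an element of order `q^v` with `b^q ∈ Z(G)` and `⟨b⟩` a Sylow `q`-subgroup, such
that `q^v` divides `|N_G(S)|`. Then some conjugate `S₁ = g S g⁻¹` of `S` is
normalized by `b` (so `⟨b, S₁⟩ = S₁ ⋊ ⟨b⟩`). -/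
theorem stmt_15 {G : Type*} [Group G] [Finite G]
    (p q : ℕ) (hp : p.Prime) (hq : q.Prime) (hpq : p ≠ q)
    (S : Sylow p G) (v : ℕ) (hv : 1 ≤ v) (b : G) (hb : orderOf b = q ^ v)
    (hbq : b ^ q ∈ Subgroup.center G)
    (hbsyl : ∃ T : Sylow q G, (T : Subgroup G) = Subgroup.zpowers b)
    (hdvd : q ^ v ∣ Nat.card ↥(Subgroup.normalizer ((S : Subgroup G) : Set G))) :
    ∃ g : G,
      b ∈ Subgroup.normalizer ((Subgroup.map (MulAut.conj g).toMonoidHom (S : Subgroup G) : Subgroup G) : Set G) ∧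
      Subgroup.map (MulAut.conj g).toMonoidHom (S : Subgroup G) ⊓
          Subgroup.zpowers b = ⊥ := by
  haveI : Fact p.Prime := ⟨hp⟩
  haveI : Fact q.Prime := ⟨hq⟩
  obtain ⟨T, hT⟩ := hbsyl
  set N := Subgroup.normalizer ((S : Subgroup G) : Set G) with hN
  -- a subgroup of N of order q^v
  obtain ⟨K, hK⟩ := Sylow.exists_subgroup_card_pow_prime (G := ↥N) q hdvd
  set Q : Subgroup G := K.map N.subtype with hQ
  have hQcard : Nat.card Q = q ^ v := by
    rw [hQ, ← hK]
    exact (Nat.card_congr (Subgroup.equivMapOfInjective K N.subtype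
      N.subtype_injective).toEquiv).symm
  have hQle : Q ≤ N := by
    rw [hQ]
    simpa using Subgroup.map_subtype_le K
  -- Q is a q-group, so contained in some Sylow q-subgroup P
  have hQp : IsPGroup q Q := IsPGroup.of_card hQcard
  obtain ⟨P, hQP⟩ := hQp.exists_le_sylow
  -- card of T is q^v
  have hTcard : Nat.card (T : Subgroup G) = q ^ v := by
    rw [hT, Nat.card_zpowers, hb]
  -- all Sylow q-subgroups have same card, and T conjugate to P
  obtain ⟨g, hg⟩ := MulAction.exists_smul_eq G T P
  have hPcard : Nat.card (P : Subgroup G) = q ^ v := by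
    rw [← hg]
    have : ((g • T : Sylow q G) : Subgroup G)
        = Subgroup.map (MulAut.conj g).toMonoidHom (T : Subgroup G) := rfl
    rw [this, ← hTcard]
    exact (Nat.card_congr (Subgroup.equivMapOfInjective _ _
      (MulAut.conj g).injective).toEquiv).symm
  -- Q = P
  have hQeqP : Q = (P : Subgroup G) := by
    refine Subgroup.eq_of_le_of_card_ge hQP ?_
    rw [hQcard, hPcard]
  -- g • b • g⁻¹ ∈ P = Q ≤ N
  have hgb : g * b * g⁻¹ ∈ N := by
    apply hQle
    rw [hQeqP, ← hg]
    have : ((g • T : Sylow q G) : Subgroup G)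
        = Subgroup.map (MulAut.conj g).toMonoidHom (T : Subgroup G) := rfl
    rw [this, hT]
    exact ⟨b, Subgroup.mem_zpowers b, by simp [MulAut.conj]⟩
  refine ⟨g⁻¹, ?_, ?_⟩
  · -- b ∈ normalizer of (conj g⁻¹) S
    have hmap : Subgroup.normalizer ((Subgroup.map (MulAut.conj g⁻¹).toMonoidHom (S : Subgroup G) : Subgroup G) : Set G)
        = Subgroup.map (MulAut.conj g⁻¹).toMonoidHom N := by
      rw [hN, Subgroup.map_normalizer_eq_of_bijective _ (MulAut.conj g⁻¹).bijective]
    rw [hmap]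
    exact ⟨g * b * g⁻¹, hgb, by simp [mul_assoc]⟩
  · -- a p-group and a q-group intersect trivially
    have h1 : IsPGroup p (Subgroup.map (MulAut.conj g⁻¹).toMonoidHom (S : Subgroup G)) :=
      S.isPGroup'.map _
    have h2 : IsPGroup q (Subgroup.zpowers b) := by
      rw [← hT]; exact T.isPGroup'
    exact (IsPGroup.disjoint_of_ne p q hpq _ _ h1 h2).eq_bot
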